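/- For R, R_x ∈ SO(3) with Ψ(R,R_x) ≤ ψ_p < 1, the attitude error vector satisfies ‖e_R‖ = √(Ψ(2-Ψ)) ≤ √(ψ_p(2-ψ_p)) < 1. -/

import Mathlib

open Matrix

noncomputable def enorm3 (v : Fin 3 → ℝ) : ℝ := ‖(WithLp.equiv 2 (Fin 3 → ℝ)).symm v‖

def vee (A : Matrix (Fin 3) (Fin 3) ℝ) : Fin 3 → ℝ := ![A 2 1, A 0 2, A 1 0]

noncomputable def Psi (R Rx : Matrix (Fin 3) (Fin 3) ℝ) : ℝ :=
  (1 / 2) * Matrix.trace (1 - Rxᵀ * R)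

noncomputable def eRvec (R Rx : Matrix (Fin 3) (Fin 3) ℝ) : Fin 3 → ℝ :=
  (1 / 2 : ℝ) • vee (Rxᵀ * R - Rᵀ * Rx)

lemma key (Q : Matrix (Fin 3) (Fin 3) ℝ) (hQ : Qᵀ * Q = 1) (hdet : Q.det = 1) :
    ((1/2)*(Q 2 1 - Q 1 2))^2 + ((1/2)*(Q 0 2 - Q 2 0))^2 + ((1/2)*(Q 1 0 - Q 0 1))^2
      = ((1/2)*(3 - (Q 0 0 + Q 1 1 + Q 2 2))) * (2 - (1/2)*(3 - (Q 0 0 + Q 1 1 + Q 2 2))) := by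
  have hadj : Q.adjugate = Qᵀ := by
    calc Q.adjugate = (Qᵀ * Q) * Q.adjugate := by rw [hQ, one_mul]
    _ = Qᵀ * (Q * Q.adjugate) := by rw [Matrix.mul_assoc]
    _ = Qᵀ := by rw [Matrix.mul_adjugate, hdet, one_smul, Matrix.mul_one]
  have e1 := congrFun (congrFun hQ 0) 0
  have e2 := congrFun (congrFun hQ 1) 1
  have e3 := congrFun (congrFun hQ 2) 2
  simp [Matrix.mul_apply, Fin.sum_univ_three, Matrix.one_apply, Matrix.transpose_apply] at e1 e2 e3
  have c1 := congrFun (congrFun hadj 0) 0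
  have c2 := congrFun (congrFun hadj 1) 1
  have c3 := congrFun (congrFun hadj 2) 2
  simp [Matrix.adjugate_fin_three, Matrix.transpose_apply] at c1 c2 c3
  linear_combination (1/4)*e1 + (1/4)*e2 + (1/4)*e3 + (1/2)*c1 + (1/2)*c2 + (1/2)*c3

theorem stmt6 (R Rx : Matrix (Fin 3) (Fin 3) ℝ) (ψp : ℝ)
    (hR : Rᵀ * R = 1) (hRdet : R.det = 1)
    (hRx : Rxᵀ * Rx = 1) (hRxdet : Rx.det = 1)
    (hψp0 : 0 ≤ ψp) (hψp1 : ψp < 1)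
    (hΨ : Psi R Rx ≤ ψp) :
    enorm3 (eRvec R Rx) = Real.sqrt (Psi R Rx * (2 - Psi R Rx)) ∧
    Real.sqrt (Psi R Rx * (2 - Psi R Rx)) ≤ Real.sqrt (ψp * (2 - ψp)) ∧
    Real.sqrt (ψp * (2 - ψp)) < 1 := by
  set Q := Rxᵀ * R with hQdef
  have hQorth : Qᵀ * Q = 1 := by
    have hRx' : Rx * Rxᵀ = 1 := mul_eq_one_comm.mp hRx
    calc Qᵀ * Q = Rᵀ * (Rx * Rxᵀ) * R := by
          simp [hQdef, Matrix.transpose_mul, Matrix.mul_assoc]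
    _ = 1 := by rw [hRx', Matrix.mul_one, hR]
  have hQdet : Q.det = 1 := by
    rw [hQdef, Matrix.det_mul, Matrix.det_transpose, hRxdet, hRdet, one_mul]
  have hPsi : Psi R Rx = (1/2)*(3 - (Q 0 0 + Q 1 1 + Q 2 2)) := by
    simp [Psi, Matrix.trace, Matrix.diag, Fin.sum_univ_three, Matrix.one_apply, ← hQdef]
  have hQt : Rᵀ * Rx = Qᵀ := by
    rw [hQdef, Matrix.transpose_mul, Matrix.transpose_transpose]
  have hsum : enorm3 (eRvec R Rx) = Real.sqrt
      (((1/2)*(Q 2 1 - Q 1 2))^2 + ((1/2)*(Q 0 2 - Q 2 0))^2 + ((1/2)*(Q 1 0 - Q 0 1))^2) := by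
    rw [enorm3, EuclideanSpace.norm_eq]
    congr 1
    have : ∀ i, ((WithLp.equiv 2 (Fin 3 → ℝ)).symm (eRvec R Rx)) i = eRvec R Rx i := fun i => rfl
    simp only [Fin.sum_univ_three, this, Real.norm_eq_abs, sq_abs]
    simp [eRvec, vee, hQt, Matrix.sub_apply, Matrix.transpose_apply, ← hQdef]
  have hkey := key Q hQorth hQdet
  have hPsinn : 0 ≤ Psi R Rx * (2 - Psi R Rx) := by
    rw [hPsi, ← hkey]; positivity
  refine ⟨by rw [hsum, hkey, ← hPsi], ?_, ?_⟩
  · apply Real.sqrt_le_sqrt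
    nlinarith [hΨ, hψp1]
  · have h1 : ψp * (2 - ψp) < 1 := by nlinarith
    calc Real.sqrt (ψp * (2 - ψp)) < Real.sqrt 1 := by
          apply Real.sqrt_lt_sqrt (by nlinarith) h1
    _ = 1 := Real.sqrt_one
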